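/- Let Y be a Banach space, ω ∈ ℕ, c ∈ ℂ with |c| ≥ 1, and A : ℤ → L(Y) with A(k+ω) = A(k) for all k ∈ ℤ and ‖A(k)‖ ≤ c₀(k), where c₀(k+ω) = c₀(k) > 0 and lim_{l→∞} c₀(−1)c₀(−2)⋯c₀(−l) = 0. If x : ℤ → Y is an (ω,c)-periodic solution of x(k+1) = A(k)x(k) for all k ∈ ℤ, then x(k) = 0 for all k ∈ ℤ. -/

import Mathlib

open Filter
open scoped BigOperators

/-- If `|c| ≥ 1`, `A` is `ω`-periodic with `‖A k‖ ≤ c₀ k`, `c₀` `ω`-periodic and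
`c₀(−1)c₀(−2)⋯c₀(−l) → 0` as `l → ∞`, then every `(ω,c)`-periodic solution of
`x(k+1) = A(k) x(k)` vanishes identically. -/
theorem stmt8 {Y : Type*} [NormedAddCommGroup Y] [NormedSpace ℂ Y] [CompleteSpace Y]
    (ω : ℕ) (hω : 0 < ω) (c : ℂ) (hc : 1 ≤ ‖c‖)
    (A : ℤ → Y →L[ℂ] Y) (hAper : ∀ k : ℤ, A (k + ω) = A k)
    (c₀ : ℤ → ℝ) (hc₀pos : ∀ k, 0 < c₀ k) (hAc : ∀ k, ‖A k‖ ≤ c₀ k)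
    (hc₀per : ∀ k : ℤ, c₀ (k + ω) = c₀ k)
    (hprod : Tendsto (fun l : ℕ => ∏ i ∈ Finset.range l, c₀ (-1 - (i : ℤ))) atTop (nhds 0))
    (x : ℤ → Y) (hxper : ∀ k : ℤ, x (k + ω) = c • x k)
    (hxeq : ∀ k : ℤ, x (k + 1) = A k (x k)) :
    ∀ k : ℤ, x k = 0 := by
  set p : ℝ := ∏ i ∈ Finset.range ω, c₀ (-1 - (i : ℤ)) with hp
  -- basic positivity
  have hPpos : ∀ (k : ℤ) (l : ℕ), 0 < ∏ i ∈ Finset.range l, c₀ (k - 1 - (i : ℤ)) := by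
    intro k l
    exact Finset.prod_pos fun i _ => hc₀pos _
  -- step 1: norm estimate
  have key : ∀ (k : ℤ) (l : ℕ),
      ‖x k‖ ≤ (∏ i ∈ Finset.range l, c₀ (k - 1 - (i : ℤ))) * ‖x (k - l)‖ := by
    intro k l
    induction l with
    | zero => simp
    | succ l ih =>
      have h1 : x (k - (l : ℤ)) = A (k - (l : ℤ) - 1) (x (k - (l : ℤ) - 1)) := by
        have := hxeq (k - (l : ℤ) - 1)
        rwa [sub_add_cancel] at this
      have h2 : ‖x (k - (l : ℤ))‖ ≤ c₀ (k - 1 - (l : ℤ)) * ‖x (k - ((l : ℕ) + 1 : ℕ))‖ := by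
        rw [h1]
        have := (A (k - (l : ℤ) - 1)).le_opNorm (x (k - (l : ℤ) - 1))
        have h3 : ‖A (k - (l : ℤ) - 1)‖ * ‖x (k - (l : ℤ) - 1)‖
            ≤ c₀ (k - (l : ℤ) - 1) * ‖x (k - (l : ℤ) - 1)‖ :=
          mul_le_mul_of_nonneg_right (hAc _) (norm_nonneg _)
        have h4 : k - 1 - (l : ℤ) = k - (l : ℤ) - 1 := by ring
        have h5 : k - ((l : ℕ) + 1 : ℕ) = k - (l : ℤ) - 1 := by push_cast; ring
        rw [h4, h5]
        exact le_trans this h3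
      calc ‖x k‖ ≤ (∏ i ∈ Finset.range l, c₀ (k - 1 - (i : ℤ))) * ‖x (k - l)‖ := ih
        _ ≤ (∏ i ∈ Finset.range l, c₀ (k - 1 - (i : ℤ)))
            * (c₀ (k - 1 - (l : ℤ)) * ‖x (k - ((l : ℕ) + 1 : ℕ))‖) :=
          mul_le_mul_of_nonneg_left h2 (le_of_lt (hPpos k l))
        _ = (∏ i ∈ Finset.range (l + 1), c₀ (k - 1 - (i : ℤ))) * ‖x (k - ((l : ℕ) + 1 : ℕ))‖ := by
          rw [Finset.prod_range_succ]; ring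
  -- step 2: one-period products are constant
  have hshift : ∀ m : ℤ, c₀ (m - ω) = c₀ m := by
    intro m
    have := hc₀per (m - ω)
    rw [sub_add_cancel] at this
    exact this.symm
  have hconst : ∀ k : ℤ, (∏ i ∈ Finset.range ω, c₀ (k - 1 - (i : ℤ))) = p := by
    have hstep : ∀ k : ℤ, (∏ i ∈ Finset.range ω, c₀ (k + 1 - 1 - (i : ℤ)))
        = ∏ i ∈ Finset.range ω, c₀ (k - 1 - (i : ℤ)) := by
      intro k
      obtain ⟨m, rfl⟩ := Nat.exists_eq_succ_of_ne_zero hω.ne'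
      rw [Finset.prod_range_succ', Finset.prod_range_succ]
      congr 1
      · apply Finset.prod_congr rfl
        intro i _
        congr 1
        push_cast; ring
      · rw [show k + 1 - 1 - ((0 : ℕ) : ℤ) = k by push_cast; ring,
          show k - 1 - (m : ℤ) = k - ((m + 1 : ℕ) : ℤ) by push_cast; ring]
        exact (hshift k).symm
    intro k
    induction k using Int.induction_on with
    | zero => rfl
    | succ n ih => rw [hstep, ih]
    | pred n ih =>
      have := hstep (-(n : ℤ) - 1)
      rw [sub_add_cancel] at this
      rw [← ih, ← this]
  -- step 3: block products
  have hblock : ∀ (k : ℤ) (n : ℕ),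
      (∏ i ∈ Finset.range (n * ω), c₀ (k - 1 - (i : ℤ))) = p ^ n := by
    intro k n
    induction n with
    | zero => simp
    | succ n ih =>
      have : (n + 1) * ω = n * ω + ω := by ring
      rw [this, Finset.prod_range_add, ih, pow_succ]
      congr 1
      rw [← hconst (k - (n * ω : ℕ))]
      apply Finset.prod_congr rfl
      intro i _
      congr 1
      push_cast; ring
  -- step 4: ‖x (k - n*ω)‖ ≤ ‖x k‖
  have hxsh : ∀ (k : ℤ) (n : ℕ), c ^ n • x (k - (n * ω : ℕ)) = x k := by
    intro k n
    induction n with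
    | zero => simp
    | succ n ih =>
      have h1 : x (k - ((n + 1) * ω : ℕ) + ω) = c • x (k - ((n + 1) * ω : ℕ)) := hxper _
      have h2 : k - ((n + 1) * ω : ℕ) + ω = k - (n * ω : ℕ) := by push_cast; ring
      rw [h2] at h1
      calc c ^ (n + 1) • x (k - ((n + 1) * ω : ℕ))
          = c ^ n • (c • x (k - ((n + 1) * ω : ℕ))) := by
            rw [pow_succ, mul_smul, smul_comm]
        _ = c ^ n • x (k - (n * ω : ℕ)) := by rw [← h1]
        _ = x k := ih
  have hxle : ∀ (k : ℤ) (n : ℕ), ‖x (k - (n * ω : ℕ))‖ ≤ ‖x k‖ := by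
    intro k n
    have h1 : ‖x k‖ = ‖c‖ ^ n * ‖x (k - (n * ω : ℕ))‖ := by
      rw [← hxsh k n, norm_smul, norm_pow]
    rw [h1]
    have hcp : (1 : ℝ) ≤ ‖c‖ ^ n := one_le_pow₀ hc
    nlinarith [norm_nonneg (x (k - ((n * ω : ℕ) : ℤ)))]
  -- step 5: p < 1
  have hppos : 0 < p := hPpos 0 ω
  have hptend : Tendsto (fun n : ℕ => p ^ n) atTop (nhds 0) := by
    have hsub : Tendsto (fun n : ℕ => n * ω) atTop atTop :=
      Tendsto.atTop_mul_const' hω tendsto_id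
    have := hprod.comp hsub
    exact this.congr fun n => by simpa using hblock 0 n
  -- conclusion
  intro k
  have hbound : ∀ n : ℕ, ‖x k‖ ≤ p ^ n * ‖x k‖ := by
    intro n
    calc ‖x k‖ ≤ (∏ i ∈ Finset.range (n * ω), c₀ (k - 1 - (i : ℤ))) * ‖x (k - (n * ω : ℕ))‖ :=
        key k (n * ω)
      _ = p ^ n * ‖x (k - (n * ω : ℕ))‖ := by rw [hblock]
      _ ≤ p ^ n * ‖x k‖ :=
        mul_le_mul_of_nonneg_left (hxle k n) (pow_nonneg hppos.le n)
  have hlim : Tendsto (fun n : ℕ => p ^ n * ‖x k‖) atTop (nhds 0) := by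
    simpa using hptend.mul_const ‖x k‖
  have : ‖x k‖ ≤ 0 := le_of_tendsto_of_tendsto' tendsto_const_nhds hlim hbound
  exact norm_le_zero_iff.mp this
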